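/- Fix x in [0,1] and n a natural number. Let C_n ~ Bin(n,x) and, independently for each k in {0,...,n}, let B_{n,k} ~ Beta(k+1, n-k+1). Define X_n = B_{n,C_n} (i.e., conditionally on C_n = k, X_n has law Beta(k+1,n-k+1)). Then the distribution of X_n has density K_n(x,t) = (n+1) * sum_{k=0}^n p_{n,k}(x) * p_{n,k}(t) with respect to Lebesgue measure on [0,1]. -/

import Mathlib

open MeasureTheory ProbabilityTheory Filter Topology

/-- Bernstein basis polynomial `p_{n,k}(t)`. -/
noncomputable def bPoly (n k : ℕ) (t : ℝ) : ℝ := (n.choose k : ℝ) * t ^ k * (1 - t) ^ (n - k)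

/-- Density of the `Beta(a,b)` distribution on `[0,1]` (real powers). -/
noncomputable def betaPdf (a b t : ℝ) : ℝ :=
  if t ∈ Set.Icc (0 : ℝ) 1 then
    t ^ (a - 1) * (1 - t) ^ (b - 1) * Real.Gamma (a + b) / (Real.Gamma a * Real.Gamma b)
  else 0

/-- The `Beta(a,b)` distribution as a measure on `ℝ`. -/
noncomputable def betaMeasure (a b : ℝ) : Measure ℝ :=
  volume.withDensity fun t => ENNReal.ofReal (betaPdf a b t)

/-- The law of `X_n` (sample `C_n ~ Bin(n,x)`, then given `C_n = k` sample from
`Beta(k+1, n-k+1)`): a mixture of beta distributions with binomial weights. -/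
noncomputable def durrmeyerMixture (n : ℕ) (x : ℝ) : Measure ℝ :=
  ∑ k ∈ Finset.range (n + 1),
    (ENNReal.ofReal (bPoly n k x)) • _root_.betaMeasure ((k : ℝ) + 1) ((n : ℝ) - k + 1)

/-- The law of `X_n` has density `K_n(x,t) = (n+1) ∑ₖ p_{n,k}(x) p_{n,k}(t)` with respect
to Lebesgue measure on `[0,1]`. -/
lemma betaPdf_measurable (a b : ℝ) : Measurable (betaPdf a b) := by
  unfold betaPdf
  exact Measurable.ite measurableSet_Icc (by fun_prop) measurable_const

lemma betaPdf_zero_of_not_mem (a b t : ℝ) (ht : t ∉ Set.Icc (0 : ℝ) 1) : betaPdf a b t = 0 := by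
  rw [betaPdf, if_neg ht]

lemma bPoly_nonneg (n k : ℕ) (t : ℝ) (ht : t ∈ Set.Icc (0 : ℝ) 1) : 0 ≤ bPoly n k t := by
  obtain ⟨h0, h1⟩ := ht
  have h1' : 0 ≤ 1 - t := by linarith
  unfold bPoly
  positivity

lemma betaPdf_eq (n k : ℕ) (hk : k ≤ n) (t : ℝ) (ht : t ∈ Set.Icc (0 : ℝ) 1) :
    betaPdf ((k : ℝ) + 1) ((n : ℝ) - k + 1) t = ((n : ℝ) + 1) * bPoly n k t := by
  rw [betaPdf, if_pos ht, bPoly]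
  have h1 : (k : ℝ) + 1 - 1 = ((k : ℕ) : ℝ) := by ring
  have h2 : (n : ℝ) - k + 1 - 1 = ((n - k : ℕ) : ℝ) := by push_cast [hk]; ring
  rw [h1, h2, Real.rpow_natCast, Real.rpow_natCast]
  have hg1 : Real.Gamma ((k : ℝ) + 1) = (Nat.factorial k : ℝ) := Real.Gamma_nat_eq_factorial k
  have hg2 : Real.Gamma ((n : ℝ) - k + 1) = (Nat.factorial (n - k) : ℝ) := by
    rw [show (n : ℝ) - k + 1 = ((n - k : ℕ) : ℝ) + 1 by push_cast [hk]; ring,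
      Real.Gamma_nat_eq_factorial]
  have hg3 : Real.Gamma ((k : ℝ) + 1 + ((n : ℝ) - k + 1)) = (Nat.factorial (n + 1) : ℝ) := by
    rw [show (k : ℝ) + 1 + ((n : ℝ) - k + 1) = ((n + 1 : ℕ) : ℝ) + 1 by push_cast; ring,
      Real.Gamma_nat_eq_factorial]
  rw [hg1, hg2, hg3]
  have hc : ((n.choose k : ℕ) : ℝ) * (Nat.factorial k : ℝ) * (Nat.factorial (n - k) : ℝ) = (Nat.factorial n : ℝ) := by
    exact_mod_cast congrArg (Nat.cast : ℕ → ℝ) (Nat.choose_mul_factorial_mul_factorial hk)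
  have hfac : (Nat.factorial (n + 1) : ℝ) = ((n : ℝ) + 1) * (Nat.factorial n : ℝ) := by
    rw [Nat.factorial_succ]; push_cast; ring
  have hk0 : (Nat.factorial k : ℝ) ≠ 0 := by positivity
  have hnk0 : (Nat.factorial (n - k) : ℝ) ≠ 0 := by positivity
  field_simp
  rw [hfac]
  linear_combination (-(((n : ℝ) + 1) * t ^ k * (1 - t) ^ (n - k))) * hc

theorem durrmeyerMixture_eq_withDensity_kernel (n : ℕ) (x : ℝ) (hx : x ∈ Set.Icc (0 : ℝ) 1) :
    durrmeyerMixture n x =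
      volume.withDensity fun t =>
        ENNReal.ofReal
          (if t ∈ Set.Icc (0 : ℝ) 1 then
            ((n : ℝ) + 1) * ∑ k ∈ Finset.range (n + 1), bPoly n k x * bPoly n k t
          else 0) := by
  have hmeas : ∀ k : ℕ,
      Measurable fun t => ENNReal.ofReal (betaPdf ((k : ℝ) + 1) ((n : ℝ) - k + 1) t) :=
    fun k => (betaPdf_measurable _ _).ennreal_ofReal
  have step1 : durrmeyerMixture n x =
      volume.withDensity fun t => ∑ k ∈ Finset.range (n + 1),
        ENNReal.ofReal (bPoly n k x) *
          ENNReal.ofReal (betaPdf ((k : ℝ) + 1) ((n : ℝ) - k + 1) t) := by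
    unfold durrmeyerMixture _root_.betaMeasure
    induction (Finset.range (n + 1)) using Finset.induction with
    | empty => simp
    | @insert a s h ih =>
      rw [Finset.sum_insert h, ih,
        show (fun t => ∑ k ∈ insert a s, ENNReal.ofReal (bPoly n k x) *
            ENNReal.ofReal (betaPdf ((k : ℝ) + 1) ((n : ℝ) - k + 1) t)) =
          (ENNReal.ofReal (bPoly n a x) •
            fun t => ENNReal.ofReal (betaPdf ((a : ℝ) + 1) ((n : ℝ) - a + 1) t)) +
          fun t => ∑ k ∈ s, ENNReal.ofReal (bPoly n k x) *
            ENNReal.ofReal (betaPdf ((k : ℝ) + 1) ((n : ℝ) - k + 1) t) by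
          funext t; simp [Finset.sum_insert h],
        withDensity_add_left (((hmeas a).const_smul _)),
        withDensity_smul _ (hmeas a)]
  rw [step1]
  congr 1
  funext t
  by_cases ht : t ∈ Set.Icc (0 : ℝ) 1
  · rw [if_pos ht]
    have hterm : ∀ k ∈ Finset.range (n + 1),
        ENNReal.ofReal (bPoly n k x) *
          ENNReal.ofReal (betaPdf ((k : ℝ) + 1) ((n : ℝ) - k + 1) t) =
        ENNReal.ofReal (bPoly n k x * (((n : ℝ) + 1) * bPoly n k t)) := by
      intro k hkr
      rw [betaPdf_eq n k (Nat.lt_succ_iff.mp (Finset.mem_range.mp hkr)) t ht,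
        ENNReal.ofReal_mul (bPoly_nonneg n k x hx)]
    rw [Finset.sum_congr rfl hterm,
      ← ENNReal.ofReal_sum_of_nonneg (fun k hkr => by
        have := bPoly_nonneg n k x hx
        have := bPoly_nonneg n k t ht
        positivity)]
    congr 1
    rw [Finset.mul_sum]
    exact Finset.sum_congr rfl fun k _ => by ring
  · rw [if_neg ht]
    simp [betaPdf_zero_of_not_mem _ _ _ ht]
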